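/- Let K ⊆ ℝⁿ be a compact set with empty interior and let p : ℝⁿ → ℝⁿ be a polynomial mapping (each coordinate function a real polynomial in n variables). Then p(K) is a compact set with empty interior. -/

import Mathlib

open Set MeasureTheory Metric Topology

/-- Homeomorphic image (via a partial homeomorphism) of a set with empty interior has empty
interior. -/
lemma nd_aux {E : Type*} [TopologicalSpace E]
    (e : OpenPartialHomeomorph E E) (t : Set E) (ht : t ⊆ e.source) (hti : interior t = ∅) :
    interior (e '' t) = ∅ := by
  by_contra h
  obtain ⟨y, hy⟩ := nonempty_iff_ne_empty.2 h
  have hVt : interior (e '' t) ⊆ e '' t := interior_subset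
  have hopen : IsOpen (e.symm '' interior (e '' t)) := by
    apply e.symm.isOpen_image_of_subset_source isOpen_interior
    rw [e.symm_source]
    refine hVt.trans ?_
    rintro z ⟨x, hx, rfl⟩; exact e.map_source (ht hx)
  have hsub : e.symm '' interior (e '' t) ⊆ t := by
    rintro z ⟨w, hw, rfl⟩
    obtain ⟨x, hx, rfl⟩ := hVt hw
    rwa [e.left_inv (ht hx)]
  have hmem : e.symm y ∈ interior t :=
    interior_maximal hsub hopen ⟨y, hy, rfl⟩
  rw [hti] at hmem
  exact hmem

lemma contDiff_mveval {n : ℕ} (q : MvPolynomial (Fin n) ℝ) :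
    ContDiff ℝ 2 (fun x : EuclideanSpace ℝ (Fin n) => MvPolynomial.eval x q) := by
  induction q using MvPolynomial.induction_on with
  | C a => simpa using contDiff_const (c := a)
  | add p q hp hq => simpa using hp.add hq
  | mul_X q i hq =>
    simp only [MvPolynomial.eval_mul, MvPolynomial.eval_X]
    exact hq.mul (PiLp.proj (𝕜 := ℝ) 2 (fun _ : Fin n => ℝ) i).contDiff

theorem polymap_image_compact_empty_interior (n : ℕ)
    (K : Set (EuclideanSpace ℝ (Fin n))) (hK : IsCompact K) (hKi : interior K = ∅)
    (p : Fin n → MvPolynomial (Fin n) ℝ) :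
    IsCompact ((fun x : EuclideanSpace ℝ (Fin n) =>
        (WithLp.toLp 2 (fun i => MvPolynomial.eval x (p i)) : EuclideanSpace ℝ (Fin n))) '' K) ∧
    interior ((fun x : EuclideanSpace ℝ (Fin n) =>
        (WithLp.toLp 2 (fun i => MvPolynomial.eval x (p i)) : EuclideanSpace ℝ (Fin n))) '' K) = ∅ := by
  classical
  set f : EuclideanSpace ℝ (Fin n) → EuclideanSpace ℝ (Fin n) :=
    fun x => WithLp.toLp 2 (fun i => MvPolynomial.eval x (p i)) with hfdef
  have hf : ContDiff ℝ 2 f := by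
    rw [contDiff_euclidean]
    exact fun i => contDiff_mveval (p i)
  refine ⟨hK.image hf.continuous, ?_⟩
  set D : EuclideanSpace ℝ (Fin n) →
      (EuclideanSpace ℝ (Fin n) →L[ℝ] EuclideanSpace ℝ (Fin n)) :=
    fun x => fderiv ℝ f x with hDdef
  have hdiff : Differentiable ℝ f := hf.differentiable two_ne_zero
  have hDc : Continuous D := hf.continuous_fderiv two_ne_zero
  have hCclosed : IsClosed {x | (D x).det = 0} :=
    isClosed_eq (ContinuousLinearMap.continuous_det.comp hDc) continuous_const
  -- the critical part
  have hS0 : IsCompact (K ∩ {x | (D x).det = 0}) := hK.inter_right hCclosed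
  have hN0null : volume (f '' (K ∩ {x | (D x).det = 0})) = 0 :=
    addHaar_image_eq_zero_of_det_fderivWithin_eq_zero volume
      (fun x _ => ((hdiff x).hasFDerivAt).hasFDerivWithinAt) (fun x hx => hx.2)
  have hN0i : interior (f '' (K ∩ {x | (D x).det = 0})) = ∅ := by
    by_contra h
    have hpos := MeasureTheory.Measure.measure_pos_of_nonempty_interior volume (nonempty_iff_ne_empty.2 h)
    rw [hN0null] at hpos
    exact lt_irrefl _ hpos
  -- the regular part: local homeomorphisms
  have hreg : ∀ x : {x : EuclideanSpace ℝ (Fin n) // (D x).det ≠ 0},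
      ∃ (e : OpenPartialHomeomorph (EuclideanSpace ℝ (Fin n)) (EuclideanSpace ℝ (Fin n))) (r : ℝ),
        0 < r ∧ ⇑e = f ∧ closedBall (x : EuclideanSpace ℝ (Fin n)) r ⊆ e.source := by
    rintro ⟨x, hx⟩
    have hst : HasStrictFDerivAt f (D x) x := hf.contDiffAt.hasStrictFDerivAt two_ne_zero
    let ex : EuclideanSpace ℝ (Fin n) ≃L[ℝ] EuclideanSpace ℝ (Fin n) :=
      (LinearMap.equivOfDetNeZero ((D x : _) : EuclideanSpace ℝ (Fin n) →ₗ[ℝ]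
        EuclideanSpace ℝ (Fin n)) hx).toContinuousLinearEquiv
    have hcoe : (ex : EuclideanSpace ℝ (Fin n) →L[ℝ] EuclideanSpace ℝ (Fin n)) = D x := by
      ext v
      simp [ex, LinearEquiv.coe_toContinuousLinearEquiv']
    have hst' : HasStrictFDerivAt f
        (ex : EuclideanSpace ℝ (Fin n) →L[ℝ] EuclideanSpace ℝ (Fin n)) x := by
      rw [hcoe]; exact hst
    obtain ⟨r, hr, hball⟩ := Metric.nhds_basis_closedBall.mem_iff.1
      ((hst'.toOpenPartialHomeomorph f).open_source.mem_nhds hst'.mem_toOpenPartialHomeomorph_source)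
    exact ⟨hst'.toOpenPartialHomeomorph f, r, hr, hst'.toOpenPartialHomeomorph_coe, hball⟩
  choose ge gr hgr hgcoe hgball using hreg
  obtain ⟨T, hTc, hTU⟩ := TopologicalSpace.isOpen_iUnion_countable
      (fun x : {x : EuclideanSpace ℝ (Fin n) // (D x).det ≠ 0} =>
        ball (x : EuclideanSpace ℝ (Fin n)) (gr x)) (fun _ => isOpen_ball)
  set S : Set (Set (EuclideanSpace ℝ (Fin n))) := insert (f '' (K ∩ {x | (D x).det = 0}))
      ((fun x : {x : EuclideanSpace ℝ (Fin n) // (D x).det ≠ 0} =>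
        f '' (K ∩ closedBall (x : EuclideanSpace ℝ (Fin n)) (gr x))) '' T) with hSdef
  have hScount : S.Countable := (hTc.image _).insert _
  have hCover : f '' K ⊆ ⋃₀ S := by
    rintro _ ⟨z, hz, rfl⟩
    by_cases hzC : (D z).det = 0
    · exact ⟨_, mem_insert _ _, ⟨z, ⟨hz, hzC⟩, rfl⟩⟩
    · have hzU : z ∈ ⋃ x : {x : EuclideanSpace ℝ (Fin n) // (D x).det ≠ 0},
          ball (x : EuclideanSpace ℝ (Fin n)) (gr x) :=
        mem_iUnion.2 ⟨⟨z, hzC⟩, mem_ball_self (hgr _)⟩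
      rw [← hTU] at hzU
      obtain ⟨x, hxT, hzball⟩ := mem_iUnion₂.1 hzU
      exact ⟨_, mem_insert_of_mem _ ⟨x, hxT, rfl⟩,
        ⟨z, ⟨hz, ball_subset_closedBall hzball⟩, rfl⟩⟩
  have hND : ∀ s ∈ S, IsNowhereDense s := by
    rintro s (rfl | ⟨x, hxT, rfl⟩)
    · rw [IsClosed.isNowhereDense_iff (hS0.image hf.continuous).isClosed]
      exact hN0i
    · have ht : K ∩ closedBall (x : EuclideanSpace ℝ (Fin n)) (gr x) ⊆ (ge x).source :=
        inter_subset_right.trans (hgball x)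
      have hti : interior (K ∩ closedBall (x : EuclideanSpace ℝ (Fin n)) (gr x)) = ∅ :=
        eq_empty_of_subset_empty (hKi ▸ interior_mono inter_subset_left)
      have himg : f '' (K ∩ closedBall (x : EuclideanSpace ℝ (Fin n)) (gr x))
          = (ge x) '' (K ∩ closedBall (x : EuclideanSpace ℝ (Fin n)) (gr x)) := by
        rw [hgcoe]
      have hcomp : IsCompact (f '' (K ∩ closedBall (x : EuclideanSpace ℝ (Fin n)) (gr x))) :=
        (hK.inter_right Metric.isClosed_closedBall).image hf.continuous
      rw [IsClosed.isNowhereDense_iff hcomp.isClosed, himg]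
      exact nd_aux (ge x) _ ht hti
  have hM : IsMeagre (f '' K) :=
    isMeagre_iff_countable_union_isNowhereDense.2 ⟨S, hND, hScount, hCover⟩
  exact interior_eq_empty_iff_dense_compl.2 (dense_of_mem_residual hM)
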